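/- Let k > 1 be a real number, let C be a finite subset of the unit sphere S^{n-1} ⊆ ℝⁿ with ⟨c, c'⟩ ≤ 1/k for all distinct c, c' ∈ C, let x ∈ C, and let N_x = { y ∈ C : ⟨x, y⟩ = 1/k }. For y ∈ N_x define y* = (y − x/k)/√(1 − 1/k²). Then each y* is a unit vector orthogonal to x, the map y ↦ y* is injective on N_x, and for all distinct y, z ∈ N_x one has ⟨y*, z*⟩ ≤ 1/(k+1). (Thus the points y* form an (n−1, |N_x|, 1/(k+1)) spherical code in the hyperplane orthogonal to x.) -/

import Mathlib

open scoped RealInnerProductSpace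

theorem iterated_kissing_configuration
    (n : ℕ) (k : ℝ) (hk : 1 < k)
    (C : Finset (EuclideanSpace ℝ (Fin n)))
    (hunit : ∀ c ∈ C, ‖c‖ = 1)
    (hinner : ∀ c ∈ C, ∀ c' ∈ C, c ≠ c' → ⟪c, c'⟫ ≤ 1 / k)
    (x : EuclideanSpace ℝ (Fin n)) (hx : x ∈ C)
    (Nx : Finset (EuclideanSpace ℝ (Fin n)))
    (hNx : ∀ y, y ∈ Nx ↔ y ∈ C ∧ ⟪x, y⟫ = 1 / k)
    (star : EuclideanSpace ℝ (Fin n) → EuclideanSpace ℝ (Fin n))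
    (hstar : ∀ y, star y = (Real.sqrt (1 - 1 / k ^ 2))⁻¹ • (y - k⁻¹ • x)) :
    (∀ y ∈ Nx, ‖star y‖ = 1) ∧
    (∀ y ∈ Nx, ⟪x, star y⟫ = (0 : ℝ)) ∧
    (∀ y ∈ Nx, ∀ z ∈ Nx, star y = star z → y = z) ∧
    (∀ y ∈ Nx, ∀ z ∈ Nx, y ≠ z → ⟪star y, star z⟫ ≤ 1 / (k + 1)) := by
  have hk0 : (0:ℝ) < k := lt_trans one_pos hk
  have hk2 : (1:ℝ) < k ^ 2 := by nlinarith
  have hpos : (0:ℝ) < 1 - 1 / k ^ 2 := by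
    have : 1 / k ^ 2 < 1 := by
      rw [div_lt_one (by positivity)]; exact hk2
    linarith
  set s : ℝ := Real.sqrt (1 - 1 / k ^ 2) with hs
  have hspos : 0 < s := Real.sqrt_pos.mpr hpos
  have hs2 : s ^ 2 = 1 - 1 / k ^ 2 := Real.sq_sqrt hpos.le
  have hxx : ⟪x, x⟫ = (1:ℝ) := by
    rw [real_inner_self_eq_norm_sq, hunit x hx]; norm_num
  -- key inner product computation
  have key : ∀ y ∈ Nx, ∀ z ∈ Nx,
      ⟪y - k⁻¹ • x, z - k⁻¹ • x⟫ = ⟪y, z⟫ - 1 / k ^ 2 := by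
    intro y hy z hz
    have hy' := (hNx y).mp hy
    have hz' := (hNx z).mp hz
    have hyx : ⟪y, x⟫ = 1 / k := by rw [real_inner_comm]; exact hy'.2
    rw [inner_sub_left, inner_sub_right, inner_sub_right, real_inner_smul_left,
      real_inner_smul_left, real_inner_smul_right, real_inner_smul_right,
      hxx, hyx, hz'.2]
    field_simp
    ring
  have keystar : ∀ y ∈ Nx, ∀ z ∈ Nx,
      ⟪star y, star z⟫ = (1 - 1 / k ^ 2)⁻¹ * (⟪y, z⟫ - 1 / k ^ 2) := by
    intro y hy z hz
    rw [hstar, hstar, real_inner_smul_left, real_inner_smul_right, key y hy z hz,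
      ← mul_assoc]
    congr 1
    rw [← mul_inv, ← sq, hs2]
  have hnorm : ∀ y ∈ Nx, ‖star y‖ = 1 := by
    intro y hy
    have hy' := (hNx y).mp hy
    have hyy : ⟪y, y⟫ = (1:ℝ) := by
      rw [real_inner_self_eq_norm_sq, hunit y hy'.1]; norm_num
    have h := keystar y hy y hy
    rw [hyy] at h
    have h1 : ⟪star y, star y⟫ = (1:ℝ) := by
      rw [h, inv_mul_cancel₀ hpos.ne']
    have := real_inner_self_eq_norm_sq (star y)
    nlinarith [norm_nonneg (star y)]
  refine ⟨hnorm, ?_, ?_, ?_⟩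
  · intro y hy
    have hy' := (hNx y).mp hy
    rw [hstar, real_inner_smul_right, inner_sub_right, real_inner_smul_right,
      hxx, hy'.2]
    field_simp
    simp
  · intro y hy z hz h
    rw [hstar, hstar] at h
    have hs0 : (s:ℝ)⁻¹ ≠ 0 := inv_ne_zero hspos.ne'
    have := smul_right_injective (EuclideanSpace ℝ (Fin n)) hs0 h
    have := sub_left_injective this
    exact this
  · intro y hy z hz hyz
    have hy' := (hNx y).mp hy
    have hz' := (hNx z).mp hz
    have hyzle : ⟪y, z⟫ ≤ 1 / k := hinner y hy'.1 z hz'.1 hyz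
    rw [keystar y hy z hz]
    have hkp1 : (0:ℝ) < k + 1 := by linarith
    rw [inv_mul_le_iff₀ hpos, mul_comm]
    have : (1 / (k + 1)) * (1 - 1 / k ^ 2) = 1 / k - 1 / k ^ 2 := by
      field_simp
      ring
    rw [this]
    linarith
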